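/- Let T=1, p=2, 0 ≤ β < 1, η_t=(1−t)^β and γ ≡ 0, with initial value ξ=1. Then the deterministic control x_t=(1−t)^{1−β} is admissible and optimal: J(x) ≤ J(y) for every admissible control y ∈ A_0(1). -/

import Mathlib

open MeasureTheory Set
open scoped ENNReal Classical

noncomputable section

/-- The cost functional `J(x) = E[∫_0^T (η_t |u_t|^p + γ_t |x_t|^p) dt]`, valued in `[0,∞]`,
where `u` is the pathwise derivative of the control `x`. -/
def cost {Ω : Type*} [MeasurableSpace Ω] (P : Measure Ω) (T p : ℝ)
    (η γ : ℝ → Ω → ℝ) (x u : ℝ → Ω → ℝ) : ℝ≥0∞ :=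
  ∫⁻ ω, (∫⁻ t in Set.Ioc (0 : ℝ) T,
    ENNReal.ofReal (η t ω * |u t ω| ^ p + γ t ω * |x t ω| ^ p)) ∂P

/-- `x` is a control with initial value `ξ` and (pathwise) derivative `u`:
`x` and `u` are progressively measurable, the paths of `x` are absolutely continuous with
`x_t = ξ + ∫_0^t u_s ds` on `[0,T]`. -/
def IsControl {Ω : Type*} {m0 : MeasurableSpace Ω} (ℱ : Filtration ℝ m0)
    (T ξ : ℝ) (x u : ℝ → Ω → ℝ) : Prop :=
  ProgMeasurable ℱ u ∧ ProgMeasurable ℱ x ∧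
  (∀ ω, IntegrableOn (fun s => u s ω) (Set.Icc 0 T)) ∧
  (∀ ω, ∀ t ∈ Set.Icc (0 : ℝ) T, x t ω = ξ + ∫ s in (0 : ℝ)..t, u s ω)

/-- An admissible control: a control with initial value `ξ` satisfying `x_T = 0` a.s. -/
def IsAdmissible {Ω : Type*} {m0 : MeasurableSpace Ω} (ℱ : Filtration ℝ m0)
    (P : Measure Ω) (T ξ : ℝ) (x u : ℝ → Ω → ℝ) : Prop :=
  IsControl ℱ T ξ x u ∧ ∀ᵐ ω ∂P, x T ω = 0

section Aux

variable {β : ℝ}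

lemma det_progMeasurable {Ω : Type*} {m0 : MeasurableSpace Ω} (ℱ : Filtration ℝ m0)
    (f : ℝ → ℝ) (hf : Measurable f) : ProgMeasurable ℱ (fun t (_ : Ω) => f t) := fun _ =>
  (hf.comp (measurable_subtype_coe.comp measurable_fst)).stronglyMeasurable

lemma II (hβ1 : β < 1) : IntervalIntegrable (fun s : ℝ => (1 - s) ^ (-β)) volume 0 1 := by
  have h : IntervalIntegrable (fun x : ℝ => x ^ (-β)) volume 0 1 :=
    intervalIntegral.intervalIntegrable_rpow' (by linarith)
  have h2 := h.comp_sub_left 1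
  simpa using h2.symm

lemma Ival (hβ1 : β < 1) (t : ℝ) :
    ∫ s in (0:ℝ)..t, (1 - s) ^ (-β) = (1 - (1 - t) ^ (1 - β)) / (1 - β) := by
  have h := intervalIntegral.integral_comp_sub_left (a := 0) (b := t) (fun x : ℝ => x ^ (-β)) 1
  simp only [sub_zero] at h
  rw [h, integral_rpow (Or.inl (by linarith)),
    show (-β + 1 : ℝ) = 1 - β from by ring, Real.one_rpow]

lemma uval (hβ1 : β < 1) (t : ℝ) :
    ∫ s in (0:ℝ)..t, -((1 - β) * (1 - s) ^ (-β)) = (1 - t) ^ (1 - β) - 1 := by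
  have hne : (1 : ℝ) - β ≠ 0 := by linarith
  rw [intervalIntegral.integral_neg, intervalIntegral.integral_const_mul, Ival hβ1]
  field_simp
  ring

lemma B_int (hβ1 : β < 1) : IntegrableOn (fun t : ℝ => (1 - t) ^ (-β)) (Ioc 0 1) volume :=
  (intervalIntegrable_iff_integrableOn_Ioc_of_le zero_le_one).1 (II hβ1)

lemma ae_Ioc_lt_one :
    ∀ᵐ t ∂(volume.restrict (Ioc (0:ℝ) 1)), t ∈ Ioc (0:ℝ) 1 ∧ t < 1 := by
  have hne1 : ∀ᵐ t : ℝ ∂volume, t ≠ (1:ℝ) := by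
    rw [ae_iff]
    have h : {a : ℝ | ¬ a ≠ 1} = {1} := by ext a; simp
    rw [h]
    exact measure_singleton 1
  filter_upwards [ae_restrict_mem measurableSet_Ioc, ae_restrict_of_ae hne1] with t ht hne
  exact ⟨ht, lt_of_le_of_ne ht.2 hne⟩

lemma B_val (hβ1 : β < 1) :
    ∫⁻ t in Ioc (0:ℝ) 1, ENNReal.ofReal ((1 - t) ^ (-β)) = ENNReal.ofReal (1 / (1 - β)) := by
  rw [← ofReal_integral_eq_lintegral_ofReal (B_int hβ1) ?_]
  · congr 1
    rw [← intervalIntegral.integral_of_le zero_le_one, Ival hβ1]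
    rw [show (1:ℝ) - 1 = 0 from by ring, Real.zero_rpow (by linarith : (1:ℝ) - β ≠ 0)]
    norm_num
  · filter_upwards [ae_restrict_mem measurableSet_Ioc] with t ht
    exact Real.rpow_nonneg (by linarith [ht.2]) _

lemma key (hβ1 : β < 1) (f : ℝ → ℝ)
    (hf : IntegrableOn f (Icc 0 1) volume) (hsum : (∫ s in (0:ℝ)..(1:ℝ), f s) = -1) :
    ENNReal.ofReal (1 - β) ≤
      ∫⁻ t in Ioc (0:ℝ) 1, ENNReal.ofReal ((1 - t) ^ β * |f t| ^ (2:ℝ)) := by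
  have hβpos : (0:ℝ) < 1 - β := by linarith
  have hfm : AEMeasurable f (volume.restrict (Ioc (0:ℝ) 1)) :=
    (hf.1.mono_measure (Measure.restrict_mono Ioc_subset_Icc_self le_rfl)).aemeasurable
  set g1 : ℝ → ℝ≥0∞ := fun t => ENNReal.ofReal ((1 - t) ^ (β/2) * |f t|) with hg1
  set g2 : ℝ → ℝ≥0∞ := fun t => ENNReal.ofReal ((1 - t) ^ (-(β/2))) with hg2
  have hm1 : AEMeasurable g1 (volume.restrict (Ioc (0:ℝ) 1)) :=
    (((by fun_prop : Measurable fun t : ℝ => (1 - t) ^ (β/2)).aemeasurable).mul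
      (measurable_abs.comp_aemeasurable hfm)).ennreal_ofReal
  have hm2 : AEMeasurable g2 (volume.restrict (Ioc (0:ℝ) 1)) :=
    ((by fun_prop : Measurable fun t : ℝ => (1 - t) ^ (-(β/2))).aemeasurable).ennreal_ofReal
  have habs_int : IntegrableOn (fun t => |f t|) (Ioc 0 1) volume :=
    (hf.mono_set Ioc_subset_Icc_self).abs
  have h1 : (1:ℝ≥0∞) ≤ ∫⁻ t in Ioc (0:ℝ) 1, ENNReal.ofReal |f t| := by
    have hr : (1:ℝ) ≤ ∫ t in Ioc (0:ℝ) 1, |f t| := by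
      have h2 := intervalIntegral.abs_integral_le_integral_abs
        (f := f) (a := 0) (b := 1) (μ := volume) zero_le_one
      rw [hsum] at h2
      simp only [abs_neg, abs_one] at h2
      rwa [intervalIntegral.integral_of_le zero_le_one] at h2
    calc (1:ℝ≥0∞) = ENNReal.ofReal 1 := by simp
    _ ≤ ENNReal.ofReal (∫ t in Ioc (0:ℝ) 1, |f t|) := ENNReal.ofReal_le_ofReal hr
    _ = _ := ofReal_integral_eq_lintegral_ofReal habs_int
        (Filter.Eventually.of_forall fun t => abs_nonneg _)
  have heq : ∀ᵐ t ∂(volume.restrict (Ioc (0:ℝ) 1)),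
      ENNReal.ofReal |f t| = (g1 * g2) t := by
    filter_upwards [ae_Ioc_lt_one] with t ht
    have hpos : (0:ℝ) < 1 - t := by linarith [ht.2]
    simp only [hg1, hg2, Pi.mul_apply]
    rw [← ENNReal.ofReal_mul (by positivity)]
    congr 1
    have hone : (1 - t) ^ (β / 2) * (1 - t) ^ (-(β / 2)) = 1 := by
      rw [← Real.rpow_add hpos]; simp
    rw [show (1 - t) ^ (β / 2) * |f t| * (1 - t) ^ (-(β / 2)) =
      ((1 - t) ^ (β / 2) * (1 - t) ^ (-(β / 2))) * |f t| from by ring, hone, one_mul]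
  have hconj : Real.HolderConjugate 2 2 := Real.HolderConjugate.two_two
  have hH := ENNReal.lintegral_mul_le_Lp_mul_Lq (volume.restrict (Ioc (0:ℝ) 1)) hconj hm1 hm2
  have hg1sq : ∀ᵐ t ∂(volume.restrict (Ioc (0:ℝ) 1)),
      g1 t ^ (2:ℝ) = ENNReal.ofReal ((1 - t) ^ β * |f t| ^ (2:ℝ)) := by
    filter_upwards [ae_Ioc_lt_one] with t ht
    have hpos : (0:ℝ) ≤ 1 - t := by linarith [ht.2]
    rw [hg1, ENNReal.ofReal_rpow_of_nonneg (by positivity) (by norm_num)]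
    congr 1
    rw [Real.mul_rpow (Real.rpow_nonneg hpos _) (abs_nonneg _), ← Real.rpow_mul hpos]
    norm_num
  have hg2sq : ∀ᵐ t ∂(volume.restrict (Ioc (0:ℝ) 1)),
      g2 t ^ (2:ℝ) = ENNReal.ofReal ((1 - t) ^ (-β)) := by
    filter_upwards [ae_Ioc_lt_one] with t ht
    have hpos : (0:ℝ) ≤ 1 - t := by linarith [ht.2]
    rw [hg2, ENNReal.ofReal_rpow_of_nonneg (Real.rpow_nonneg hpos _) (by norm_num),
      ← Real.rpow_mul hpos]
    norm_num
  have hAB : (1:ℝ≥0∞) ≤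
      (∫⁻ t in Ioc (0:ℝ) 1, ENNReal.ofReal ((1 - t) ^ β * |f t| ^ (2:ℝ))) ^ (1/2:ℝ) *
        ENNReal.ofReal (1/(1-β)) ^ (1/2:ℝ) := by
    calc (1:ℝ≥0∞) ≤ ∫⁻ t in Ioc (0:ℝ) 1, ENNReal.ofReal |f t| := h1
    _ = ∫⁻ t in Ioc (0:ℝ) 1, (g1 * g2) t := lintegral_congr_ae heq
    _ ≤ (∫⁻ t in Ioc (0:ℝ) 1, g1 t ^ (2:ℝ)) ^ (1/2:ℝ) *
          (∫⁻ t in Ioc (0:ℝ) 1, g2 t ^ (2:ℝ)) ^ (1/2:ℝ) := hH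
    _ = _ := by
        rw [lintegral_congr_ae hg1sq, lintegral_congr_ae hg2sq, B_val hβ1]
  set A := ∫⁻ t in Ioc (0:ℝ) 1, ENNReal.ofReal ((1 - t) ^ β * |f t| ^ (2:ℝ)) with hA
  have h2 : (1:ℝ≥0∞) ≤ A * ENNReal.ofReal (1/(1-β)) := by
    have h3 := ENNReal.rpow_le_rpow hAB (by norm_num : (0:ℝ) ≤ 2)
    rw [ENNReal.one_rpow, ENNReal.mul_rpow_of_nonneg _ _ (by norm_num : (0:ℝ) ≤ 2),
      ← ENNReal.rpow_mul, ← ENNReal.rpow_mul] at h3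
    norm_num at h3
    rw [one_div]
    exact h3
  calc ENNReal.ofReal (1 - β) = 1 * ENNReal.ofReal (1 - β) := (one_mul _).symm
  _ ≤ (A * ENNReal.ofReal (1/(1-β))) * ENNReal.ofReal (1 - β) := mul_le_mul_left h2 _
  _ = A * (ENNReal.ofReal (1/(1-β)) * ENNReal.ofReal (1 - β)) := mul_assoc _ _ _
  _ = A := by
      rw [← ENNReal.ofReal_mul (by positivity),
        show (1/(1-β)) * (1 - β) = 1 from by field_simp]
      simp

end Aux

/-- for `T = 1`, `p = 2`, `0 ≤ β < 1`, `η_t = (1−t)^β`, `γ ≡ 0` and initial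
value `ξ = 1`, the deterministic control `x_t = (1−t)^{1−β}` (with derivative
`u_t = −(1−β)(1−t)^{−β}`) is admissible and optimal. -/
theorem power_control_optimal
    {Ω : Type*} {m0 : MeasurableSpace Ω} (P : Measure Ω) [IsProbabilityMeasure P]
    (ℱ : Filtration ℝ m0) (β : ℝ) (hβ0 : 0 ≤ β) (hβ1 : β < 1)
    (x u : ℝ → Ω → ℝ)
    (hxdef : ∀ t ω, x t ω = (1 - t) ^ (1 - β))
    (hudef : ∀ t ω, u t ω = -((1 - β) * (1 - t) ^ (-β))) :
    IsAdmissible ℱ P 1 1 x u ∧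
    ∀ y w, IsAdmissible ℱ P 1 1 y w →
      cost P 1 2 (fun t _ => (1 - t) ^ β) (fun _ _ => 0) x u ≤
        cost P 1 2 (fun t _ => (1 - t) ^ β) (fun _ _ => 0) y w := by
  have hβpos : (0:ℝ) < 1 - β := by linarith
  have hux : u = fun t (_ : Ω) => -((1 - β) * (1 - t) ^ (-β)) :=
    funext fun t => funext fun ω => hudef t ω
  have hxx : x = fun t (_ : Ω) => (1 - t) ^ (1 - β) :=
    funext fun t => funext fun ω => hxdef t ω
  constructor
  · refine ⟨⟨?_, ?_, ?_, ?_⟩, ?_⟩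
    · rw [hux]
      exact det_progMeasurable ℱ _ (by fun_prop)
    · rw [hxx]
      exact det_progMeasurable ℱ _ (by fun_prop)
    · intro ω
      have he : (fun s => u s ω) = fun s => -((1 - β) * (1 - s) ^ (-β)) :=
        funext fun s => hudef s ω
      rw [he]
      exact (intervalIntegrable_iff_integrableOn_Icc_of_le zero_le_one).1
        (((II hβ1).const_mul (1 - β)).neg)
    · intro ω t ht
      rw [hxdef,
        intervalIntegral.integral_congr (fun s _ => hudef s ω), uval hβ1]
      ring
    · refine Filter.Eventually.of_forall fun ω => ?_
      rw [hxdef]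
      norm_num [Real.zero_rpow (by linarith : (1:ℝ) - β ≠ 0)]
  · intro y w hy
    have hJx : cost P 1 2 (fun t (_ : Ω) => (1 - t) ^ β) (fun _ _ => 0) x u
        = ENNReal.ofReal (1 - β) := by
      unfold cost
      have hinner : ∀ ω : Ω, (∫⁻ t in Set.Ioc (0:ℝ) 1,
          ENNReal.ofReal ((1 - t) ^ β * |u t ω| ^ (2:ℝ) + 0 * |x t ω| ^ (2:ℝ)))
          = ENNReal.ofReal (1 - β) := by
        intro ω
        have hcongr : ∀ᵐ t ∂(volume.restrict (Ioc (0:ℝ) 1)),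
            ENNReal.ofReal ((1 - t) ^ β * |u t ω| ^ (2:ℝ) + 0 * |x t ω| ^ (2:ℝ))
            = ENNReal.ofReal ((1 - β) ^ (2:ℝ)) * ENNReal.ofReal ((1 - t) ^ (-β)) := by
          filter_upwards [ae_Ioc_lt_one] with t ht
          have hpos : (0:ℝ) < 1 - t := by linarith [ht.2]
          have habs : |u t ω| = (1 - β) * (1 - t) ^ (-β) := by
            rw [hudef, abs_neg, abs_of_nonneg (by positivity)]
          rw [habs, zero_mul, add_zero, ← ENNReal.ofReal_mul (by positivity)]
          congr 1
          rw [Real.mul_rpow (le_of_lt hβpos) (Real.rpow_nonneg hpos.le _),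
            ← Real.rpow_mul hpos.le]
          rw [show (1 - t) ^ β * ((1 - β) ^ (2:ℝ) * (1 - t) ^ (-β * 2))
            = (1 - β) ^ (2:ℝ) * ((1 - t) ^ β * (1 - t) ^ (-β * 2)) from by ring,
            ← Real.rpow_add hpos, show β + -β * 2 = -β from by ring]
        rw [lintegral_congr_ae hcongr,
          lintegral_const_mul' _ _ ENNReal.ofReal_ne_top, B_val hβ1,
          ← ENNReal.ofReal_mul (by positivity)]
        congr 1
        rw [show (2:ℝ) = ((2:ℕ):ℝ) from by norm_num, Real.rpow_natCast]
        field_simp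
      simp only [hinner]
      simp
    rw [hJx]
    unfold cost
    have hmain : ∀ᵐ ω ∂P, ENNReal.ofReal (1 - β) ≤
        ∫⁻ t in Set.Ioc (0:ℝ) 1,
          ENNReal.ofReal ((1 - t) ^ β * |w t ω| ^ (2:ℝ) + 0 * |y t ω| ^ (2:ℝ)) := by
      filter_upwards [hy.2] with ω hω
      have hint := hy.1.2.2.1 ω
      have hsum : (∫ s in (0:ℝ)..(1:ℝ), w s ω) = -1 := by
        have hform := hy.1.2.2.2 ω 1 (Set.mem_Icc.2 ⟨zero_le_one, le_rfl⟩)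
        rw [hω] at hform
        linarith
      refine le_trans (key hβ1 (fun s => w s ω) hint hsum) (lintegral_mono fun t => ?_)
      exact ENNReal.ofReal_le_ofReal (by simp)
    calc ENNReal.ofReal (1 - β) = ∫⁻ _ : Ω, ENNReal.ofReal (1 - β) ∂P := by simp
    _ ≤ _ := lintegral_mono_ae hmain
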